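/- Let U ⊆ ℝ⁴ be open, let Φ : U → ℝ and h, e : U → ℝ³ be twice continuously differentiable, let ν : U → ℝ³ be continuously differentiable, and assume ∂₁Φ ≠ 0 on U. Let ε > 0. If ε∂ₜ^Φ h + ∇^Φ × e + ε(∇^Φ · h)ν = 0 holds on U, then (∂ₜ^Φ + ν · ∇^Φ)(∇^Φ · h) + (∇^Φ · ν)(∇^Φ · h) = 0 on U. -/

import Mathlib

/-- Partial derivative `∂ᵢ f` on `ℝ⁴` (coordinates `(t, x₁, x₂, x₃)` indexed by `Fin 4`,
with `∂₀ = ∂ₜ`). -/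
noncomputable def pd (i : Fin 4) (f : (Fin 4 → ℝ) → ℝ) (x : Fin 4 → ℝ) : ℝ :=
  fderiv ℝ f x (Pi.single i 1)

/-- Transformed derivative `∂ᵢ^Φ`: `∂ₜ^Φ f = ∂ₜf − (∂ₜΦ/∂₁Φ)∂₁f`,
`∂₁^Φ f = ∂₁f/∂₁Φ`, and `∂ⱼ^Φ f = ∂ⱼf − (∂ⱼΦ/∂₁Φ)∂₁f` for `j = 2, 3`. -/
noncomputable def pdPhi (Φ : (Fin 4 → ℝ) → ℝ) (i : Fin 4) (f : (Fin 4 → ℝ) → ℝ)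
    (x : Fin 4 → ℝ) : ℝ :=
  if i = 1 then pd 1 f x / pd 1 Φ x else pd i f x - pd i Φ x / pd 1 Φ x * pd 1 f x

/-- Transformed divergence `∇^Φ · u = ∂₁^Φu₁ + ∂₂^Φu₂ + ∂₃^Φu₃`. -/
noncomputable def divPhi (Φ : (Fin 4 → ℝ) → ℝ) (u : (Fin 4 → ℝ) → Fin 3 → ℝ)
    (x : Fin 4 → ℝ) : ℝ :=
  pdPhi Φ 1 (fun y => u y 0) x + pdPhi Φ 2 (fun y => u y 1) x + pdPhi Φ 3 (fun y => u y 2) x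

/-- Transformed curl
`∇^Φ × u = (∂₂^Φu₃ − ∂₃^Φu₂, ∂₃^Φu₁ − ∂₁^Φu₃, ∂₁^Φu₂ − ∂₂^Φu₁)`. -/
noncomputable def curlPhi (Φ : (Fin 4 → ℝ) → ℝ) (u : (Fin 4 → ℝ) → Fin 3 → ℝ)
    (x : Fin 4 → ℝ) : Fin 3 → ℝ :=
  ![pdPhi Φ 2 (fun y => u y 2) x - pdPhi Φ 3 (fun y => u y 1) x,
    pdPhi Φ 3 (fun y => u y 0) x - pdPhi Φ 1 (fun y => u y 2) x,
    pdPhi Φ 1 (fun y => u y 1) x - pdPhi Φ 2 (fun y => u y 0) x]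

section Helpers

variable {f g Φ : (Fin 4 → ℝ) → ℝ} {x : Fin 4 → ℝ} {i j k : Fin 4}

private lemma pd_add (hf : DifferentiableAt ℝ f x) (hg : DifferentiableAt ℝ g x) :
    pd i (fun y => f y + g y) x = pd i f x + pd i g x := by
  simp [pd, fderiv_fun_add hf hg]

private lemma pd_sub (hf : DifferentiableAt ℝ f x) (hg : DifferentiableAt ℝ g x) :
    pd i (fun y => f y - g y) x = pd i f x - pd i g x := by
  simp [pd, fderiv_fun_sub hf hg]

private lemma pd_const_mul (c : ℝ) (hf : DifferentiableAt ℝ f x) :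
    pd i (fun y => c * f y) x = c * pd i f x := by
  simp [pd, fderiv_const_mul hf c]

private lemma pd_mul (hf : DifferentiableAt ℝ f x) (hg : DifferentiableAt ℝ g x) :
    pd i (fun y => f y * g y) x = pd i f x * g x + f x * pd i g x := by
  simp [pd, fderiv_fun_mul hf hg]
  ring

private lemma pd_inv (hg : DifferentiableAt ℝ g x) (hx : g x ≠ 0) :
    pd i (fun y => (g y)⁻¹) x = -(pd i g x / g x ^ 2) := by
  have H : HasFDerivAt (fun y => (g y)⁻¹)
      ((-(ContinuousLinearMap.mulLeftRight ℝ ℝ (g x)⁻¹ (g x)⁻¹)).comp (fderiv ℝ g x)) x :=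
    (hasFDerivAt_inv' hx).comp x hg.hasFDerivAt
  simp only [pd, H.fderiv, ContinuousLinearMap.comp_apply, ContinuousLinearMap.neg_apply,
    ContinuousLinearMap.mulLeftRight_apply]
  rw [sq, div_eq_mul_inv, mul_inv]
  ring

private lemma pd_div (hf : DifferentiableAt ℝ f x) (hg : DifferentiableAt ℝ g x)
    (hx : g x ≠ 0) :
    pd i (fun y => f y / g y) x = (pd i f x * g x - f x * pd i g x) / g x ^ 2 := by
  simp only [div_eq_mul_inv]
  rw [pd_mul (g := fun y => (g y)⁻¹) hf (hg.inv hx), pd_inv hg hx]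
  field_simp
  ring

private lemma contDiffAt_pd (hf : ContDiffAt ℝ 2 f x) : ContDiffAt ℝ 1 (pd j f) x := by
  have h1 : ContDiffAt ℝ 1 (fderiv ℝ f) x := hf.fderiv_right (by norm_num)
  exact (ContinuousLinearMap.apply ℝ ℝ (Pi.single j 1)).contDiff.comp_contDiffAt x h1

private lemma diffAt_pd (hf : ContDiffAt ℝ 2 f x) : DifferentiableAt ℝ (pd j f) x :=
  (contDiffAt_pd hf).differentiableAt one_ne_zero

private lemma diffAt_div (hf : DifferentiableAt ℝ f x) (hg : DifferentiableAt ℝ g x)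
    (hx : g x ≠ 0) : DifferentiableAt ℝ (fun y => f y / g y) x := by
  simp only [div_eq_mul_inv]
  exact hf.mul (hg.inv hx)

private lemma pd_pd_comm (hf : ContDiffAt ℝ 2 f x) : pd i (pd j f) x = pd j (pd i f) x := by
  have hd : DifferentiableAt ℝ (fderiv ℝ f) x :=
    (hf.fderiv_right (m := 1) (by norm_num)).differentiableAt one_ne_zero
  have key : ∀ v w : Fin 4 → ℝ,
      fderiv ℝ (fun y => fderiv ℝ f y v) x w = fderiv ℝ (fderiv ℝ f) x w v := by
    intro v w
    rw [fderiv_clm_apply hd (differentiableAt_const _)]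
    simp
  have hsymm := hf.isSymmSndFDerivAt (by simp [minSmoothness_of_isRCLikeNormedField])
  show fderiv ℝ (fun y => fderiv ℝ f y (Pi.single j 1)) x (Pi.single i 1)
      = fderiv ℝ (fun y => fderiv ℝ f y (Pi.single i 1)) x (Pi.single j 1)
  rw [key, key]
  exact hsymm _ _

private lemma diffAt_pdPhi (hΦ : ContDiffAt ℝ 2 Φ x) (ha : pd 1 Φ x ≠ 0)
    (hf : ContDiffAt ℝ 2 f x) : DifferentiableAt ℝ (pdPhi Φ j f) x := by
  by_cases hj : j = 1
  · subst hj
    have hfun : pdPhi Φ 1 f = fun y => pd 1 f y / pd 1 Φ y := by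
      funext y; simp [pdPhi]
    rw [hfun]
    exact diffAt_div (diffAt_pd hf) (diffAt_pd hΦ) ha
  · have hfun : pdPhi Φ j f = fun y => pd j f y - pd j Φ y / pd 1 Φ y * pd 1 f y := by
      funext y; simp [pdPhi, hj]
    rw [hfun]
    exact (diffAt_pd hf).sub ((diffAt_div (diffAt_pd hΦ) (diffAt_pd hΦ) ha).mul (diffAt_pd hf))

private lemma pd_pdPhi_one (hΦ : ContDiffAt ℝ 2 Φ x) (ha : pd 1 Φ x ≠ 0)
    (hf : ContDiffAt ℝ 2 f x) :
    pd i (pdPhi Φ 1 f) x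
      = (pd i (pd 1 f) x * pd 1 Φ x - pd 1 f x * pd i (pd 1 Φ) x) / pd 1 Φ x ^ 2 := by
  have hfun : pdPhi Φ 1 f = fun y => pd 1 f y / pd 1 Φ y := by
    funext y; simp [pdPhi]
  rw [hfun, pd_div (diffAt_pd hf) (diffAt_pd hΦ) ha]

private lemma pd_pdPhi_ne (hj : j ≠ 1) (hΦ : ContDiffAt ℝ 2 Φ x) (ha : pd 1 Φ x ≠ 0)
    (hf : ContDiffAt ℝ 2 f x) :
    pd i (pdPhi Φ j f) x
      = pd i (pd j f) x
        - ((pd i (pd j Φ) x * pd 1 Φ x - pd j Φ x * pd i (pd 1 Φ) x) / pd 1 Φ x ^ 2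
            * pd 1 f x
          + pd j Φ x / pd 1 Φ x * pd i (pd 1 f) x) := by
  have hfun : pdPhi Φ j f = fun y => pd j f y - pd j Φ y / pd 1 Φ y * pd 1 f y := by
    funext y; simp [pdPhi, hj]
  rw [hfun, pd_sub (g := fun y => pd j Φ y / pd 1 Φ y * pd 1 f y) (diffAt_pd hf) ((diffAt_div (diffAt_pd hΦ) (diffAt_pd hΦ) ha).mul (diffAt_pd hf)),
    pd_mul (diffAt_div (diffAt_pd hΦ) (diffAt_pd hΦ) ha) (diffAt_pd hf),
    pd_div (diffAt_pd hΦ) (diffAt_pd hΦ) ha]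

private lemma pdPhi_comm_one (hj : j ≠ 1) (hΦ : ContDiffAt ℝ 2 Φ x) (ha : pd 1 Φ x ≠ 0)
    (hf : ContDiffAt ℝ 2 f x) :
    pdPhi Φ 1 (pdPhi Φ j f) x = pdPhi Φ j (pdPhi Φ 1 f) x := by
  have h1 : pdPhi Φ 1 (pdPhi Φ j f) x = pd 1 (pdPhi Φ j f) x / pd 1 Φ x := by simp [pdPhi]
  have h2 : pdPhi Φ j (pdPhi Φ 1 f) x
      = pd j (pdPhi Φ 1 f) x - pd j Φ x / pd 1 Φ x * pd 1 (pdPhi Φ 1 f) x := by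
    simp [pdPhi, hj]
  rw [h1, h2, pd_pdPhi_ne hj hΦ ha hf, pd_pdPhi_one hΦ ha hf, pd_pdPhi_one hΦ ha hf,
    pd_pd_comm (i := j) (j := 1) hf, pd_pd_comm (i := j) (j := 1) hΦ]
  field_simp
  ring

private lemma pdPhi_comm_ne (hi : i ≠ 1) (hj : j ≠ 1) (hΦ : ContDiffAt ℝ 2 Φ x)
    (ha : pd 1 Φ x ≠ 0) (hf : ContDiffAt ℝ 2 f x) :
    pdPhi Φ i (pdPhi Φ j f) x = pdPhi Φ j (pdPhi Φ i f) x := by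
  have h1 : pdPhi Φ i (pdPhi Φ j f) x
      = pd i (pdPhi Φ j f) x - pd i Φ x / pd 1 Φ x * pd 1 (pdPhi Φ j f) x := by
    simp [pdPhi, hi]
  have h2 : pdPhi Φ j (pdPhi Φ i f) x
      = pd j (pdPhi Φ i f) x - pd j Φ x / pd 1 Φ x * pd 1 (pdPhi Φ i f) x := by
    simp [pdPhi, hj]
  rw [h1, h2, pd_pdPhi_ne hj hΦ ha hf (i := i), pd_pdPhi_ne hj hΦ ha hf (i := 1),
    pd_pdPhi_ne hi hΦ ha hf (i := j), pd_pdPhi_ne hi hΦ ha hf (i := 1),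
    pd_pd_comm (i := j) (j := i) hf, pd_pd_comm (i := j) (j := i) hΦ,
    pd_pd_comm (i := 1) (j := i) hf, pd_pd_comm (i := 1) (j := i) hΦ,
    pd_pd_comm (i := 1) (j := j) hf, pd_pd_comm (i := 1) (j := j) hΦ]
  field_simp
  ring

private lemma pdPhi_comm (hΦ : ContDiffAt ℝ 2 Φ x) (ha : pd 1 Φ x ≠ 0)
    (hf : ContDiffAt ℝ 2 f x) (i j : Fin 4) :
    pdPhi Φ i (pdPhi Φ j f) x = pdPhi Φ j (pdPhi Φ i f) x := by
  by_cases hi : i = 1 <;> by_cases hj : j = 1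
  · subst hi; subst hj; rfl
  · subst hi; exact pdPhi_comm_one hj hΦ ha hf
  · subst hj; exact (pdPhi_comm_one hi hΦ ha hf).symm
  · exact pdPhi_comm_ne hi hj hΦ ha hf

private lemma pdPhi_add (hf : DifferentiableAt ℝ f x) (hg : DifferentiableAt ℝ g x) :
    pdPhi Φ k (fun y => f y + g y) x = pdPhi Φ k f x + pdPhi Φ k g x := by
  simp only [pdPhi, pd_add hf hg]
  split_ifs <;> ring

private lemma pdPhi_sub (hf : DifferentiableAt ℝ f x) (hg : DifferentiableAt ℝ g x) :
    pdPhi Φ k (fun y => f y - g y) x = pdPhi Φ k f x - pdPhi Φ k g x := by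
  simp only [pdPhi, pd_sub hf hg]
  split_ifs <;> ring

private lemma pdPhi_const_mul (c : ℝ) (hf : DifferentiableAt ℝ f x) :
    pdPhi Φ k (fun y => c * f y) x = c * pdPhi Φ k f x := by
  simp only [pdPhi, pd_const_mul c hf]
  split_ifs <;> ring

private lemma pdPhi_mul (hf : DifferentiableAt ℝ f x) (hg : DifferentiableAt ℝ g x) :
    pdPhi Φ k (fun y => f y * g y) x = pdPhi Φ k f x * g x + f x * pdPhi Φ k g x := by
  simp only [pdPhi, pd_mul hf hg]
  split_ifs <;> ring

private lemma pdPhi_zero_of_eventually {F : (Fin 4 → ℝ) → ℝ} (k : Fin 4)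
    (hF : F =ᶠ[nhds x] fun _ => 0) : pdPhi Φ k F x = 0 := by
  have hp : ∀ m : Fin 4, pd m F x = 0 := by
    intro m
    simp only [pd]
    rw [hF.fderiv_eq]
    simp
  simp [pdPhi, hp]

private lemma pdPhi_maxwell {hc c1 c2 dv nc : (Fin 4 → ℝ) → ℝ} (k : Fin 4) (ε : ℝ)
    (dh : DifferentiableAt ℝ hc x) (dc1 : DifferentiableAt ℝ c1 x)
    (dc2 : DifferentiableAt ℝ c2 x) (ddv : DifferentiableAt ℝ dv x)
    (dn : DifferentiableAt ℝ nc x) :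
    pdPhi Φ k (fun y => ε * hc y + (c1 y - c2 y) + ε * dv y * nc y) x
      = ε * pdPhi Φ k hc x + (pdPhi Φ k c1 x - pdPhi Φ k c2 x)
        + ε * (pdPhi Φ k dv x * nc x + dv x * pdPhi Φ k nc x) := by
  have d12 : DifferentiableAt ℝ (fun y => c1 y - c2 y) x := dc1.sub dc2
  have dA : DifferentiableAt ℝ (fun y => ε * hc y) x := dh.const_mul ε
  have dC : DifferentiableAt ℝ (fun y => ε * dv y) x := ddv.const_mul ε
  have A1 : pdPhi Φ k (fun y => ε * hc y + (c1 y - c2 y) + ε * dv y * nc y) x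
      = pdPhi Φ k (fun y => ε * hc y + (c1 y - c2 y)) x
        + pdPhi Φ k (fun y => ε * dv y * nc y) x := pdPhi_add (dA.add d12) (dC.mul dn)
  have A2 : pdPhi Φ k (fun y => ε * hc y + (c1 y - c2 y)) x
      = pdPhi Φ k (fun y => ε * hc y) x + pdPhi Φ k (fun y => c1 y - c2 y) x :=
    pdPhi_add dA d12
  have A3 : pdPhi Φ k (fun y => ε * hc y) x = ε * pdPhi Φ k hc x := pdPhi_const_mul ε dh
  have A4 : pdPhi Φ k (fun y => c1 y - c2 y) x = pdPhi Φ k c1 x - pdPhi Φ k c2 x :=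
    pdPhi_sub dc1 dc2
  have A5 : pdPhi Φ k (fun y => ε * dv y * nc y) x
      = pdPhi Φ k (fun y => ε * dv y) x * nc x + (ε * dv x) * pdPhi Φ k nc x :=
    pdPhi_mul dC dn
  have A6 : pdPhi Φ k (fun y => ε * dv y) x = ε * pdPhi Φ k dv x := pdPhi_const_mul ε ddv
  linear_combination A1 + A2 + A3 + A4 + A5 + nc x * A6

end Helpers

/-- If the reduced vacuum Maxwell equation `ε∂ₜ^Φ h + ∇^Φ × e + ε(∇^Φ · h)ν = 0` holds on
an open set `U` (with `Φ, h, e` twice continuously differentiable, `ν` continuously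
differentiable, and `∂₁Φ ≠ 0` on `U`), then
`(∂ₜ^Φ + ν·∇^Φ)(∇^Φ·h) + (∇^Φ·ν)(∇^Φ·h) = 0` on `U`. -/
theorem stmt_13 (ε : ℝ) (hε : 0 < ε) (U : Set (Fin 4 → ℝ)) (hU : IsOpen U)
    (Φ : (Fin 4 → ℝ) → ℝ) (h e ν : (Fin 4 → ℝ) → Fin 3 → ℝ)
    (hΦ : ContDiffOn ℝ 2 Φ U) (hh : ContDiffOn ℝ 2 h U) (he : ContDiffOn ℝ 2 e U)
    (hν : ContDiffOn ℝ 1 ν U)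
    (hΦ1 : ∀ x ∈ U, pd 1 Φ x ≠ 0)
    (heq : ∀ x ∈ U, ∀ i : Fin 3,
      ε * pdPhi Φ 0 (fun y => h y i) x + curlPhi Φ e x i
        + ε * divPhi Φ h x * ν x i = 0) :
    ∀ x ∈ U,
      pdPhi Φ 0 (divPhi Φ h) x
        + (∑ j : Fin 3, ν x j * pdPhi Φ j.succ (divPhi Φ h) x)
        + divPhi Φ ν x * divPhi Φ h x = 0 := by
  intro x hx
  have hmem : U ∈ nhds x := hU.mem_nhds hx
  have ha : pd 1 Φ x ≠ 0 := hΦ1 x hx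
  have hΦx : ContDiffAt ℝ 2 Φ x := (hΦ x hx).contDiffAt hmem
  have hH : ∀ i : Fin 3, ContDiffAt ℝ 2 (fun y => h y i) x :=
    fun i => ((contDiffOn_pi.1 hh i) x hx).contDiffAt hmem
  have hE : ∀ i : Fin 3, ContDiffAt ℝ 2 (fun y => e y i) x :=
    fun i => ((contDiffOn_pi.1 he i) x hx).contDiffAt hmem
  have hN : ∀ i : Fin 3, DifferentiableAt ℝ (fun y => ν y i) x :=
    fun i => (((contDiffOn_pi.1 hν i) x hx).contDiffAt hmem).differentiableAt one_ne_zero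
  have dH : ∀ (k : Fin 4) (i : Fin 3), DifferentiableAt ℝ (pdPhi Φ k fun y => h y i) x :=
    fun k i => diffAt_pdPhi hΦx ha (hH i)
  have dE : ∀ (k : Fin 4) (i : Fin 3), DifferentiableAt ℝ (pdPhi Φ k fun y => e y i) x :=
    fun k i => diffAt_pdPhi hΦx ha (hE i)
  have dDiv : DifferentiableAt ℝ (divPhi Φ h) x := ((dH 1 0).add (dH 2 1)).add (dH 3 2)
  -- the Maxwell equation, componentwise, with the curl expanded
  have hF0 : (fun y => ε * pdPhi Φ 0 (fun z => h z 0) y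
      + (pdPhi Φ 2 (fun z => e z 2) y - pdPhi Φ 3 (fun z => e z 1) y)
      + ε * divPhi Φ h y * ν y 0) =ᶠ[nhds x] fun _ => 0 :=
    Filter.eventuallyEq_of_mem hmem fun y hy => by
      simpa [curlPhi] using heq y hy 0
  have hF1 : (fun y => ε * pdPhi Φ 0 (fun z => h z 1) y
      + (pdPhi Φ 3 (fun z => e z 0) y - pdPhi Φ 1 (fun z => e z 2) y)
      + ε * divPhi Φ h y * ν y 1) =ᶠ[nhds x] fun _ => 0 :=
    Filter.eventuallyEq_of_mem hmem fun y hy => by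
      simpa [curlPhi] using heq y hy 1
  have hF2 : (fun y => ε * pdPhi Φ 0 (fun z => h z 2) y
      + (pdPhi Φ 1 (fun z => e z 1) y - pdPhi Φ 2 (fun z => e z 0) y)
      + ε * divPhi Φ h y * ν y 2) =ᶠ[nhds x] fun _ => 0 :=
    Filter.eventuallyEq_of_mem hmem fun y hy => by
      simpa [curlPhi] using heq y hy 2
  -- expansions of the derivatives of the Maxwell equation
  have E1 : ε * pdPhi Φ 1 (pdPhi Φ 0 fun z => h z 0) x
      + (pdPhi Φ 1 (pdPhi Φ 2 fun z => e z 2) x - pdPhi Φ 1 (pdPhi Φ 3 fun z => e z 1) x)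
      + ε * (pdPhi Φ 1 (divPhi Φ h) x * ν x 0
          + divPhi Φ h x * pdPhi Φ 1 (fun z => ν z 0) x) = 0 :=
    (pdPhi_maxwell 1 ε (dH 0 0) (dE 2 2) (dE 3 1) dDiv (hN 0)).symm.trans
      (pdPhi_zero_of_eventually 1 hF0)
  have E2 : ε * pdPhi Φ 2 (pdPhi Φ 0 fun z => h z 1) x
      + (pdPhi Φ 2 (pdPhi Φ 3 fun z => e z 0) x - pdPhi Φ 2 (pdPhi Φ 1 fun z => e z 2) x)
      + ε * (pdPhi Φ 2 (divPhi Φ h) x * ν x 1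
          + divPhi Φ h x * pdPhi Φ 2 (fun z => ν z 1) x) = 0 :=
    (pdPhi_maxwell 2 ε (dH 0 1) (dE 3 0) (dE 1 2) dDiv (hN 1)).symm.trans
      (pdPhi_zero_of_eventually 2 hF1)
  have E3 : ε * pdPhi Φ 3 (pdPhi Φ 0 fun z => h z 2) x
      + (pdPhi Φ 3 (pdPhi Φ 1 fun z => e z 1) x - pdPhi Φ 3 (pdPhi Φ 2 fun z => e z 0) x)
      + ε * (pdPhi Φ 3 (divPhi Φ h) x * ν x 2
          + divPhi Φ h x * pdPhi Φ 3 (fun z => ν z 2) x) = 0 :=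
    (pdPhi_maxwell 3 ε (dH 0 2) (dE 1 1) (dE 2 0) dDiv (hN 2)).symm.trans
      (pdPhi_zero_of_eventually 3 hF2)
  -- commutation of the transformed derivatives
  have C1 : pdPhi Φ 1 (pdPhi Φ 0 fun z => h z 0) x
      = pdPhi Φ 0 (pdPhi Φ 1 fun z => h z 0) x := pdPhi_comm hΦx ha (hH 0) 1 0
  have C2 : pdPhi Φ 2 (pdPhi Φ 0 fun z => h z 1) x
      = pdPhi Φ 0 (pdPhi Φ 2 fun z => h z 1) x := pdPhi_comm hΦx ha (hH 1) 2 0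
  have C3 : pdPhi Φ 3 (pdPhi Φ 0 fun z => h z 2) x
      = pdPhi Φ 0 (pdPhi Φ 3 fun z => h z 2) x := pdPhi_comm hΦx ha (hH 2) 3 0
  have CeA : pdPhi Φ 2 (pdPhi Φ 1 fun z => e z 2) x
      = pdPhi Φ 1 (pdPhi Φ 2 fun z => e z 2) x := pdPhi_comm hΦx ha (hE 2) 2 1
  have CeB : pdPhi Φ 3 (pdPhi Φ 1 fun z => e z 1) x
      = pdPhi Φ 1 (pdPhi Φ 3 fun z => e z 1) x := pdPhi_comm hΦx ha (hE 1) 3 1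
  have CeC : pdPhi Φ 3 (pdPhi Φ 2 fun z => e z 0) x
      = pdPhi Φ 2 (pdPhi Φ 3 fun z => e z 0) x := pdPhi_comm hΦx ha (hE 0) 3 2
  -- splitting of the divergence
  have S0 : pdPhi Φ 0 (divPhi Φ h) x
      = pdPhi Φ 0 (fun y => pdPhi Φ 1 (fun z => h z 0) y + pdPhi Φ 2 (fun z => h z 1) y) x
        + pdPhi Φ 0 (pdPhi Φ 3 fun z => h z 2) x :=
    pdPhi_add ((dH 1 0).add (dH 2 1)) (dH 3 2)
  have S1 : pdPhi Φ 0 (fun y => pdPhi Φ 1 (fun z => h z 0) y + pdPhi Φ 2 (fun z => h z 1) y) x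
      = pdPhi Φ 0 (pdPhi Φ 1 fun z => h z 0) x + pdPhi Φ 0 (pdPhi Φ 2 fun z => h z 1) x :=
    pdPhi_add (dH 1 0) (dH 2 1)
  have S : pdPhi Φ 0 (divPhi Φ h) x
      = pdPhi Φ 0 (pdPhi Φ 1 fun z => h z 0) x + pdPhi Φ 0 (pdPhi Φ 2 fun z => h z 1) x
        + pdPhi Φ 0 (pdPhi Φ 3 fun z => h z 2) x := by rw [S0, S1]
  have Dν : divPhi Φ ν x
      = pdPhi Φ 1 (fun z => ν z 0) x + pdPhi Φ 2 (fun z => ν z 1) x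
        + pdPhi Φ 3 (fun z => ν z 2) x := rfl
  have hne : ε ≠ 0 := ne_of_gt hε
  rw [Fin.sum_univ_three]
  simp only [show (0 : Fin 3).succ = (1 : Fin 4) from rfl,
    show (1 : Fin 3).succ = (2 : Fin 4) from rfl,
    show (2 : Fin 3).succ = (3 : Fin 4) from rfl]
  apply mul_left_cancel₀ hne
  rw [mul_zero]
  linear_combination E1 + E2 + E3 - ε * C1 - ε * C2 - ε * C3 + ε * S
    + ε * divPhi Φ h x * Dν + CeA - CeB + CeC
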